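/- Let a : ℝ → ℝ be bounded measurable with 0 < ⌊a⌋ ≤ ⌈a⌉ < ∞ (least and upper means as liminf/limsup of averages). Then ⌊a⌋ = sup over A ∈ W^{1,∞}_loc(ℝ) ∩ L^∞(ℝ) of essinf_{τ∈ℝ} (a(τ) - A'(τ)). -/

import Mathlib

open MeasureTheory intervalIntegral

/-- The least mean `⌊a⌋ = lim_{r→∞} inf_{t-s≥r} (1/(t-s)) ∫_s^t a`. -/
noncomputable def leastMean (a : ℝ → ℝ) : ℝ :=
  ⨆ r : ℝ, ⨅ p : {p : ℝ × ℝ // r ≤ p.2 - p.1},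
    ((p : ℝ × ℝ).2 - (p : ℝ × ℝ).1)⁻¹ * ∫ τ in (p : ℝ × ℝ).1..(p : ℝ × ℝ).2, a τ

/-- The upper mean `⌈a⌉ = lim_{r→∞} sup_{t-s≥r} (1/(t-s)) ∫_s^t a`. -/
noncomputable def upperMean (a : ℝ → ℝ) : ℝ :=
  ⨅ r : ℝ, ⨆ p : {p : ℝ × ℝ // r ≤ p.2 - p.1},
    ((p : ℝ × ℝ).2 - (p : ℝ × ℝ).1)⁻¹ * ∫ τ in (p : ℝ × ℝ).1..(p : ℝ × ℝ).2, a τ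

section Helpers

open Set Filter Topology


lemma essInf_eq_sSup' (f : ℝ → ℝ) (μ : Measure ℝ) :
    essInf f μ = sSup {b : ℝ | ∀ᵐ x ∂μ, b ≤ f x} := by
  rw [essInf, Filter.liminf, Filter.limsInf]
  congr 1

lemma bddAbove_essLB (f : ℝ → ℝ) : BddAbove {b : ℝ | ∀ᵐ x : ℝ, b ≤ f x} := by
  by_contra h
  rw [not_bddAbove_iff] at h
  have h2 : ∀ n : ℕ, ∃ b : ℝ, (∀ᵐ x : ℝ, b ≤ f x) ∧ (n : ℝ) < b := by
    intro n
    obtain ⟨b, hb, hnb⟩ := h n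
    exact ⟨b, hb, hnb⟩
  choose b hb hnb using h2
  have hae : ∀ᵐ x : ℝ, ∀ n : ℕ, b n ≤ f x := ae_all_iff.2 hb
  obtain ⟨x, hx⟩ := hae.exists
  obtain ⟨n, hn⟩ := exists_nat_gt (f x)
  exact absurd ((hnb n).trans_le (hx n)) (by linarith)

lemma abs_deriv_le_of_lip {f : ℝ → ℝ} {τ d K : ℝ} (hK : 0 ≤ K) (hd : HasDerivAt f d τ)
    (hb : ∀ᶠ y in 𝓝[≠] τ, |f y - f τ| ≤ K * |y - τ|) : |d| ≤ K := by
  have h1 := hasDerivAt_iff_tendsto_slope.1 hd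
  refine le_of_tendsto h1.abs ?_
  filter_upwards [hb, self_mem_nhdsWithin] with y hy hyne
  rw [slope_def_field, abs_div]
  rcases eq_or_ne y τ with rfl | hne
  · simp at hyne
  · rw [div_le_iff₀ (by simpa [sub_eq_zero] using abs_pos.2 (sub_ne_zero.2 hne))]
    linarith [hy]

lemma deriv_nonneg_of_monotone {g : ℝ → ℝ} (hg : Monotone g) {τ d : ℝ}
    (hd : HasDerivAt g d τ) : 0 ≤ d := by
  have h1 := hasDerivAt_iff_tendsto_slope.1 hd
  have h2 : Tendsto (slope g τ) (𝓝[>] τ) (𝓝 d) :=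
    h1.mono_left (nhdsWithin_mono _ (fun y hy => ne_of_gt hy))
  refine ge_of_tendsto h2 ?_
  filter_upwards [self_mem_nhdsWithin] with y (hy : τ < y)
  rw [slope_def_field]
  exact div_nonneg (sub_nonneg.2 (hg hy.le)) (sub_nonneg.2 hy.le)


lemma lipschitzOnWith_Icc_glue {f : ℝ → ℝ} {K1 K2 : NNReal} {p q r : ℝ}
    (h1 : LipschitzOnWith K1 f (Icc p q)) (h2 : LipschitzOnWith K2 f (Icc q r)) :
    LipschitzOnWith (max K1 K2) f (Icc p r) := by
  rcases le_total q p with hqp | hpq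
  · exact fun x hx y hy => le_trans ((h2.mono (Icc_subset_Icc hqp le_rfl)) hx hy)
      (mul_le_mul_left (ENNReal.coe_le_coe.2 (le_max_right K1 K2)) _)
  rcases le_total r q with hrq | hqr
  · exact fun x hx y hy => le_trans ((h1.mono (Icc_subset_Icc le_rfl hrq)) hx hy)
      (mul_le_mul_left (ENNReal.coe_le_coe.2 (le_max_left K1 K2)) _)
  have key : ∀ x ∈ Icc p r, ∀ y ∈ Icc p r, x ≤ y → dist (f x) (f y) ≤ (max K1 K2 : NNReal) * dist x y := by
    intro x hx y hy hxy
    have hc : ((max K1 K2 : NNReal) : ℝ) = max (K1 : ℝ) (K2 : ℝ) := by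
      simp [NNReal.coe_max]
    rcases le_total y q with hyq | hqy
    · calc dist (f x) (f y) ≤ K1 * dist x y :=
            (lipschitzOnWith_iff_dist_le_mul.1 h1) x ⟨hx.1, hxy.trans hyq⟩ y ⟨hy.1, hyq⟩
        _ ≤ (max K1 K2 : NNReal) * dist x y := by
            rw [hc]; exact mul_le_mul_of_nonneg_right (le_max_left _ _) dist_nonneg
    rcases le_total q x with hqx | hxq
    · calc dist (f x) (f y) ≤ K2 * dist x y :=
            (lipschitzOnWith_iff_dist_le_mul.1 h2) x ⟨hqx, hx.2⟩ y ⟨hqx.trans hxy, hy.2⟩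
        _ ≤ (max K1 K2 : NNReal) * dist x y := by
            rw [hc]; exact mul_le_mul_of_nonneg_right (le_max_right _ _) dist_nonneg
    · have d1 : dist (f x) (f q) ≤ K1 * dist x q :=
        (lipschitzOnWith_iff_dist_le_mul.1 h1) x ⟨hx.1, hxq⟩ q ⟨hpq, le_rfl⟩
      have d2 : dist (f q) (f y) ≤ K2 * dist q y :=
        (lipschitzOnWith_iff_dist_le_mul.1 h2) q ⟨le_rfl, hqr⟩ y ⟨hqy, hy.2⟩
      have e1 : dist x q + dist q y = dist x y := by
        rw [Real.dist_eq, Real.dist_eq, Real.dist_eq,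
          abs_of_nonpos (by linarith), abs_of_nonpos (by linarith), abs_of_nonpos (by linarith)]
        ring
      calc dist (f x) (f y) ≤ dist (f x) (f q) + dist (f q) (f y) := dist_triangle _ _ _
        _ ≤ K1 * dist x q + K2 * dist q y := add_le_add d1 d2
        _ ≤ (max K1 K2 : NNReal) * dist x q + (max K1 K2 : NNReal) * dist q y := by
            rw [hc]
            exact add_le_add (mul_le_mul_of_nonneg_right (le_max_left _ _) dist_nonneg)
              (mul_le_mul_of_nonneg_right (le_max_right _ _) dist_nonneg)
        _ = (max K1 K2 : NNReal) * dist x y := by rw [← e1]; ring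
  refine lipschitzOnWith_iff_dist_le_mul.2 (fun x hx y hy => ?_)
  rcases le_total x y with h | h
  · exact key x hx y hy h
  · rw [dist_comm (f x), dist_comm x]; exact key y hy x hx h

lemma LocallyLipschitz.exists_lipschitzOnWith_Icc {f : ℝ → ℝ} (hf : LocallyLipschitz f)
    (u v : ℝ) : ∃ K : NNReal, LipschitzOnWith K f (Icc u v) := by
  rcases le_or_gt u v with huv | hvu
  swap
  · exact ⟨0, by rw [Icc_eq_empty (not_le.2 hvu)]; exact fun x hx => absurd hx (notMem_empty x)⟩
  set T := {x : ℝ | x ∈ Icc u v ∧ ∃ K : NNReal, LipschitzOnWith K f (Icc u x)} with hT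
  have hu : u ∈ T := by
    refine ⟨⟨le_rfl, huv⟩, 0, ?_⟩
    intro x hx y hy
    rw [Icc_self] at hx hy
    simp [mem_singleton_iff.1 hx, mem_singleton_iff.1 hy]
  have hbdd : BddAbove T := ⟨v, fun x hx => hx.1.2⟩
  set m := sSup T with hm
  have hum : u ≤ m := le_csSup hbdd hu
  have hmv : m ≤ v := csSup_le ⟨u, hu⟩ (fun x hx => hx.1.2)
  obtain ⟨K₀, t, ht, hK₀⟩ := hf m
  obtain ⟨ε, hε, hball⟩ := Metric.mem_nhds_iff.1 ht
  set δ := ε / 2 with hδ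
  have hδ0 : 0 < δ := half_pos hε
  have hIcc : LipschitzOnWith K₀ f (Icc (m - δ) (m + δ)) := by
    refine hK₀.mono fun y hy => hball ?_
    rw [Metric.mem_ball, Real.dist_eq]
    exact abs_lt.2 ⟨by linarith [hy.1], by linarith [hy.2]⟩
  obtain ⟨x, hxT, hxgt⟩ := exists_lt_of_lt_csSup ⟨u, hu⟩ (show m - δ < m by linarith)
  obtain ⟨K₁, hK₁⟩ := hxT.2
  have hxm : x ≤ m := le_csSup hbdd hxT
  set z := min v (m + δ) with hz
  have hxz : x ≤ z := le_min hxT.1.2 (by linarith)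
  have hlip : LipschitzOnWith (max K₁ K₀) f (Icc u z) :=
    lipschitzOnWith_Icc_glue hK₁
      (hIcc.mono (Icc_subset_Icc (by linarith) (min_le_right _ _)))
  have hzT : z ∈ T := ⟨⟨hxT.1.1.trans hxz, min_le_left _ _⟩, _, hlip⟩
  have hzm : z ≤ m := le_csSup hbdd hzT
  have hmv' : m = v := by
    by_contra hne
    have h : m < v := lt_of_le_of_ne hmv hne
    have : m < z := lt_min h (by linarith)
    linarith
  have hzv : z = v := by
    rw [hz, hmv']
    exact min_eq_left (by linarith)
  exact ⟨_, hzv ▸ hlip⟩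

lemma LocallyLipschitz.ae_differentiableAt' {f : ℝ → ℝ} (hf : LocallyLipschitz f) :
    ∀ᵐ x : ℝ, DifferentiableAt ℝ f x := by
  have H : ∀ n : ℕ, ∀ᵐ x : ℝ, x ∈ Ioo (-(n : ℝ)) n → DifferentiableAt ℝ f x := by
    intro n
    obtain ⟨K, hK⟩ := hf.exists_lipschitzOnWith_Icc (-(n : ℝ)) n
    filter_upwards [hK.ae_differentiableWithinAt_of_mem] with x hx hxm
    exact (hx (Ioo_subset_Icc_self hxm)).differentiableAt (Icc_mem_nhds hxm.1 hxm.2)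
  filter_upwards [ae_all_iff.2 H] with x hx
  obtain ⟨n, hn⟩ := exists_nat_gt |x|
  exact hx n ⟨by cases abs_lt.1 hn; linarith, (le_abs_self x).trans_lt hn⟩


lemma intervalIntegrable_of_bounded {g : ℝ → ℝ} (hg : Measurable g) {L : ℝ}
    (hb : ∀ t, |g t| ≤ L) (s t : ℝ) : IntervalIntegrable g volume s t := by
  constructor <;>
  · refine Integrable.mono' (integrable_const L) hg.aestronglyMeasurable ?_
    exact Eventually.of_forall fun x => (by simpa using hb x)

lemma ae_hasDerivAt_primitive {g : ℝ → ℝ} (hg : Measurable g) {L : ℝ}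
    (hb : ∀ t, |g t| ≤ L) :
    ∀ᵐ x : ℝ, HasDerivAt (fun t => ∫ u in (0:ℝ)..t, g u) (g x) x := by
  have hInt : ∀ s t : ℝ, IntervalIntegrable g volume s t :=
    intervalIntegrable_of_bounded hg hb
  have hloc : LocallyIntegrable g volume := by
    rw [locallyIntegrable_iff]
    intro K hK
    refine Integrable.mono' (integrableOn_const hK.measure_lt_top.ne)
      hg.aestronglyMeasurable (Eventually.of_forall fun x => by simpa using hb x)
  have hv := (IsUnifLocDoublingMeasure.vitaliFamily (volume : Measure ℝ) 1).ae_tendsto_average hloc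
  filter_upwards [hv] with x hx
  rw [hasDerivAt_iff_tendsto_slope, ← nhdsLT_sup_nhdsGT, tendsto_sup]
  have havg : ∀ y z : ℝ, y < z → ⨍ w in Icc y z, g w = (z - y)⁻¹ * ∫ w in y..z, g w := by
    intro y z hyz
    rw [setAverage_eq, Real.volume_real_Icc_of_le hyz.le,
      integral_Icc_eq_integral_Ioc, ← integral_of_le hyz.le, smul_eq_mul]
  constructor
  · have h1 := hx.comp (Real.tendsto_Icc_vitaliFamily_left x)
    apply h1.congr'
    filter_upwards [self_mem_nhdsWithin] with y (hy : y < x)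
    have hFy : (∫ u in (0:ℝ)..y, g u) - ∫ u in (0:ℝ)..x, g u = ∫ u in x..y, g u :=
      integral_interval_sub_left (hInt 0 y) (hInt 0 x)
    rw [Function.comp_apply, havg y x hy, slope_def_field, hFy, integral_symm x y,
      show y - x = -(x - y) by ring, div_neg, div_eq_inv_mul]
    ring
  · have h1 := hx.comp (Real.tendsto_Icc_vitaliFamily_right x)
    apply h1.congr'
    filter_upwards [self_mem_nhdsWithin] with y (hy : x < y)
    have hFy : (∫ u in (0:ℝ)..y, g u) - ∫ u in (0:ℝ)..x, g u = ∫ u in x..y, g u :=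
      integral_interval_sub_left (hInt 0 y) (hInt 0 x)
    rw [Function.comp_apply, havg x y hy, slope_def_field, hFy, div_eq_inv_mul]
lemma key_FTC_ineq {A φ : ℝ → ℝ} (hA : LocallyLipschitz A) (hφm : Measurable φ) {Lφ : ℝ}
    (hφb : ∀ u, |φ u| ≤ Lφ) (hle : ∀ᵐ τ : ℝ, deriv A τ ≤ φ τ) {s t : ℝ} (hst : s ≤ t) :
    A t - A s ≤ ∫ τ in s..t, φ τ := by
  obtain ⟨K, hK⟩ := hA.exists_lipschitzOnWith_Icc (s - 1) (t + 1)
  have hAc : Continuous A := hA.continuous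
  have hAint : ∀ p q : ℝ, IntervalIntegrable A volume p q := fun p q => hAc.intervalIntegrable p q
  set h : ℕ → ℝ := fun n => ((n : ℝ) + 1)⁻¹ with hh
  have hh0 : ∀ n, 0 < h n := fun n => by positivity
  have hh1 : ∀ n, h n ≤ 1 := fun n => by
    rw [hh]
    exact inv_le_one_of_one_le₀ (by push_cast; linarith [Nat.cast_nonneg (α := ℝ) n])
  have hhto : Tendsto h atTop (𝓝 0) := by
    have := tendsto_one_div_add_atTop_nhds_zero_nat (𝕜 := ℝ)
    simpa [one_div] using this
  set g : ℕ → ℝ → ℝ := fun n τ => (A (τ + h n) - A τ) * (h n)⁻¹ with hg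
  have hseqto : ∀ b : ℝ, Tendsto (fun n => b + h n) atTop (𝓝[≠] b) := by
    intro b
    apply tendsto_nhdsWithin_of_tendsto_nhds_of_eventually_within
    · simpa using hhto.const_add b
    · exact Eventually.of_forall fun n => by
        simp only [mem_compl_iff, mem_singleton_iff]
        intro hcon
        nlinarith [hh0 n, congrArg (fun z => z - b) hcon]
  have hpt : ∀ τ : ℝ, DifferentiableAt ℝ A τ → Tendsto (fun n => g n τ) atTop (𝓝 (deriv A τ)) := by
    intro τ hτ
    have h1 := hasDerivAt_iff_tendsto_slope.1 hτ.hasDerivAt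
    have h3 := h1.comp (hseqto τ)
    apply h3.congr
    intro n
    rw [Function.comp_apply, slope_def_field, add_sub_cancel_left, div_eq_mul_inv]
  have hlim : ∀ b : ℝ, Tendsto (fun n => (∫ u in b..(b + h n), A u) * (h n)⁻¹) atTop (𝓝 (A b)) := by
    intro b
    have hD : HasDerivAt (fun u => ∫ x in b..u, A x) (A b) b :=
      integral_hasDerivAt_right (hAint b b) ⟨univ, univ_mem, hAc.aestronglyMeasurable.restrict⟩
        hAc.continuousAt
    have h1 := hasDerivAt_iff_tendsto_slope.1 hD
    have h3 := h1.comp (hseqto b)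
    apply h3.congr
    intro n
    rw [Function.comp_apply, slope_def_field, integral_same, sub_zero, add_sub_cancel_left,
      div_eq_mul_inv]
  have heq : ∀ n, ∫ τ in s..t, g n τ
      = ((∫ u in t..(t + h n), A u) - ∫ u in s..(s + h n), A u) * (h n)⁻¹ := by
    intro n
    rw [hg]
    simp only
    rw [intervalIntegral.integral_mul_const]
    congr 1
    have i1 : IntervalIntegrable (fun x => A (x + h n)) volume s t :=
      (hAc.comp (continuous_add_right (h n))).intervalIntegrable s t
    rw [intervalIntegral.integral_sub i1 (hAint s t)]
    rw [intervalIntegral.integral_comp_add_right]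
    have e1 : ∫ u in (s + h n)..(t + h n), A u
        = (∫ u in (s + h n)..t, A u) + ∫ u in t..(t + h n), A u :=
      (integral_add_adjacent_intervals (hAint _ _) (hAint _ _)).symm
    have e2 : ∫ u in s..t, A u = (∫ u in s..(s + h n), A u) + ∫ u in (s + h n)..t, A u :=
      (integral_add_adjacent_intervals (hAint _ _) (hAint _ _)).symm
    rw [e1, e2]; ring
  have hseq : Tendsto (fun n => ∫ τ in s..t, g n τ) atTop (𝓝 (A t - A s)) := by
    have h2 := (hlim t).sub (hlim s)
    apply Tendsto.congr ?_ h2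
    intro n
    rw [heq n]; ring
  have hbound : ∀ n, ∀ τ ∈ Ioc s t, |g n τ| ≤ (K : ℝ) := by
    intro n τ hτ
    have h1 : τ ∈ Icc (s - 1) (t + 1) := ⟨by linarith [hτ.1], by linarith [hτ.2]⟩
    have h2 : τ + h n ∈ Icc (s - 1) (t + 1) :=
      ⟨by linarith [hτ.1, (hh0 n).le], by linarith [hτ.2, hh1 n]⟩
    have hd := (lipschitzOnWith_iff_dist_le_mul.1 hK) (τ + h n) h2 τ h1
    rw [Real.dist_eq, Real.dist_eq, add_sub_cancel_left, abs_of_pos (hh0 n)] at hd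
    rw [hg]
    simp only
    rw [abs_mul, abs_inv, abs_of_pos (hh0 n)]
    calc |A (τ + h n) - A τ| * (h n)⁻¹ ≤ ((K : ℝ) * h n) * (h n)⁻¹ :=
          mul_le_mul_of_nonneg_right hd (by positivity)
      _ = (K : ℝ) := by rw [mul_assoc, mul_inv_cancel₀ (hh0 n).ne', mul_one]
  have hDCT : Tendsto (fun n => ∫ τ in Ioc s t, g n τ) atTop
      (𝓝 (∫ τ in Ioc s t, deriv A τ)) := by
    apply tendsto_integral_of_dominated_convergence (fun _ => (K : ℝ))
    · intro n
      exact (((hAc.comp (continuous_add_right (h n))).sub hAc).mul continuous_const).aestronglyMeasurable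
    · exact integrableOn_const measure_Ioc_lt_top.ne
    · intro n
      rw [ae_restrict_iff' measurableSet_Ioc]
      exact Eventually.of_forall fun τ hτ => by
        simpa [Real.norm_eq_abs] using hbound n τ hτ
    · exact ae_restrict_of_ae (hA.ae_differentiableAt'.mono fun τ hτ => hpt τ hτ)
  have hAts : A t - A s = ∫ τ in Ioc s t, deriv A τ := by
    refine tendsto_nhds_unique ?_ hDCT
    apply hseq.congr
    intro n
    rw [integral_of_le hst]
  have hdb : ∀ τ ∈ Ioc s t, |deriv A τ| ≤ (K : ℝ) := by
    intro τ hτ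
    by_cases hd : DifferentiableAt ℝ A τ
    · refine abs_deriv_le_of_lip K.coe_nonneg hd.hasDerivAt ?_
      have hmem : Ioo (s - 1) (t + 1) ∈ 𝓝[≠] τ :=
        nhdsWithin_le_nhds (isOpen_Ioo.mem_nhds ⟨by linarith [hτ.1], by linarith [hτ.2]⟩)
      filter_upwards [hmem] with y hy
      have hdd := (lipschitzOnWith_iff_dist_le_mul.1 hK) y (Ioo_subset_Icc_self hy) τ
        ⟨by linarith [hτ.1], by linarith [hτ.2]⟩
      rw [Real.dist_eq, Real.dist_eq] at hdd
      exact hdd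
    · rw [deriv_zero_of_not_differentiableAt hd]
      simpa using K.coe_nonneg
  have hint1 : IntegrableOn (deriv A) (Ioc s t) volume := by
    refine Integrable.mono'
      (show IntegrableOn (fun _ => (K : ℝ)) (Ioc s t) volume from
        integrableOn_const measure_Ioc_lt_top.ne)
      (measurable_deriv A).aestronglyMeasurable ?_
    rw [ae_restrict_iff' measurableSet_Ioc]
    exact Eventually.of_forall fun τ hτ => by simpa [Real.norm_eq_abs] using hdb τ hτ
  have hint2 : IntegrableOn φ (Ioc s t) volume := (intervalIntegrable_of_bounded hφm hφb s t).1
  have hmono : ∫ τ in Ioc s t, deriv A τ ≤ ∫ τ in Ioc s t, φ τ :=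
    integral_mono_ae hint1 hint2 (ae_restrict_of_ae hle)
  rw [integral_of_le hst, hAts]
  exact hmono

noncomputable def lmInner (a : ℝ → ℝ) (r : ℝ) : ℝ :=
  ⨅ p : {p : ℝ × ℝ // r ≤ p.2 - p.1},
    ((p : ℝ × ℝ).2 - (p : ℝ × ℝ).1)⁻¹ * ∫ τ in (p : ℝ × ℝ).1..(p : ℝ × ℝ).2, a τ

lemma leastMean_eq (a : ℝ → ℝ) : leastMean a = ⨆ r : ℝ, lmInner a r := rfl
instance pairNonempty (r : ℝ) : Nonempty {p : ℝ × ℝ // r ≤ p.2 - p.1} :=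
  ⟨⟨(0, max r 0), by simpa using le_max_left r 0⟩⟩

section
variable {a : ℝ → ℝ} {M : ℝ}

lemma avg_abs_le (hbd : ∀ t, |a t| ≤ M) (p : ℝ × ℝ) :
    |(p.2 - p.1)⁻¹ * ∫ τ in p.1..p.2, a τ| ≤ M := by
  have hM : 0 ≤ M := le_trans (abs_nonneg _) (hbd 0)
  have h1 : |∫ τ in p.1..p.2, a τ| ≤ M * |p.2 - p.1| := by
    simpa [Real.norm_eq_abs] using
      intervalIntegral.norm_integral_le_of_norm_le_const (C := M) (f := a)
        (fun x _ => by simpa [Real.norm_eq_abs] using hbd x)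
  rcases eq_or_ne (p.2 - p.1) 0 with h | h
  · simp [h, hM]
  · rw [abs_mul, abs_inv, inv_mul_le_iff₀ (abs_pos.2 h)]
    linarith

lemma lmInner_bddBelow (hbd : ∀ t, |a t| ≤ M) (r : ℝ) :
    BddBelow (Set.range fun p : {p : ℝ × ℝ // r ≤ p.2 - p.1} =>
      ((p : ℝ × ℝ).2 - (p : ℝ × ℝ).1)⁻¹ * ∫ τ in (p : ℝ × ℝ).1..(p : ℝ × ℝ).2, a τ) := by
  refine ⟨-M, fun x hx => ?_⟩
  obtain ⟨q, rfl⟩ := hx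
  exact neg_le_of_abs_le (avg_abs_le hbd q)

lemma lmInner_le (hbd : ∀ t, |a t| ≤ M) {r : ℝ} {p : ℝ × ℝ} (hp : r ≤ p.2 - p.1) :
    lmInner a r ≤ (p.2 - p.1)⁻¹ * ∫ τ in p.1..p.2, a τ :=
  ciInf_le (lmInner_bddBelow hbd r) ⟨p, hp⟩

lemma abs_lmInner_le (hbd : ∀ t, |a t| ≤ M) (r : ℝ) : |lmInner a r| ≤ M := by
  rw [abs_le]
  constructor
  · exact le_ciInf fun p => neg_le_of_abs_le (avg_abs_le hbd p)
  · exact le_trans (lmInner_le hbd (p := (0, max r 0)) (by simpa using le_max_left r 0))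
      (le_of_abs_le (avg_abs_le hbd _))

lemma lmInner_le_leastMean (hbd : ∀ t, |a t| ≤ M) (r : ℝ) : lmInner a r ≤ leastMean a := by
  rw [leastMean_eq]
  exact le_ciSup ⟨M, fun x hx => by obtain ⟨q, rfl⟩ := hx; exact le_of_abs_le (abs_lmInner_le hbd q)⟩ r

lemma abs_leastMean_le (hbd : ∀ t, |a t| ≤ M) : |leastMean a| ≤ M := by
  rw [abs_le]
  constructor
  · exact le_trans (neg_le_of_abs_le (abs_lmInner_le hbd 0)) (lmInner_le_leastMean hbd 0)
  · rw [leastMean_eq]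
    exact ciSup_le fun r => le_of_abs_le (abs_lmInner_le hbd r)

lemma exists_lmInner_gt (hbd : ∀ t, |a t| ≤ M) {c : ℝ} (hc : c < leastMean a) :
    ∃ r : ℝ, c < lmInner a r := by
  by_contra h
  push_neg at h
  rw [leastMean_eq] at hc
  exact absurd (ciSup_le h) (not_le.2 hc)

lemma dirB (hmeas : Measurable a) (hbd : ∀ t, |a t| ≤ M) (h0 : 0 < leastMean a)
    {A : ℝ → ℝ} (hA : LocallyLipschitz A) {C : ℝ} (hC : ∀ u, |A u| ≤ C) :
    essInf (fun τ => a τ - deriv A τ) volume ≤ leastMean a := by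
  rw [essInf_eq_sSup']
  rcases Set.eq_empty_or_nonempty {b : ℝ | ∀ᵐ x : ℝ, b ≤ a x - deriv A x} with hS | hS
  · rw [hS, Real.sSup_empty]; exact h0.le
  refine csSup_le hS fun b hb => ?_
  have hC0 : 0 ≤ C := le_trans (abs_nonneg _) (hC 0)
  have hFTC : ∀ s t : ℝ, s ≤ t → A t - A s ≤ ∫ τ in s..t, (a τ - b) := by
    intro s t hst
    refine key_FTC_ineq hA (hmeas.sub measurable_const) (Lφ := M + |b|)
      (fun u => by
        calc |a u - b| ≤ |a u| + |b| := abs_sub _ _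
          _ ≤ M + |b| := by linarith [hbd u]) ?_ hst
    filter_upwards [hb] with τ hτ
    show deriv A τ ≤ a τ - b
    linarith
  refine le_of_forall_pos_le_add fun ε hε => ?_
  set R := max 1 (2 * C / ε) with hR
  have hR1 : (1 : ℝ) ≤ R := le_max_left _ _
  have hR0 : (0 : ℝ) < R := lt_of_lt_of_le one_pos hR1
  have hRC : 2 * C ≤ ε * R :=
    calc 2 * C = ε * (2 * C / ε) := by field_simp
      _ ≤ ε * R := mul_le_mul_of_nonneg_left (le_max_right _ _) hε.le
  have hinner : b - ε ≤ lmInner a R := by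
    refine le_ciInf fun p => ?_
    obtain ⟨⟨s, t⟩, hp⟩ := p
    simp only at hp ⊢
    have hd0 : (0 : ℝ) < t - s := lt_of_lt_of_le hR0 hp
    have h1 := hFTC s t (by linarith)
    have h2 : ∫ τ in s..t, (a τ - b) = (∫ τ in s..t, a τ) - (t - s) * b := by
      rw [intervalIntegral.integral_sub (intervalIntegrable_of_bounded hmeas hbd s t)
        intervalIntegrable_const, intervalIntegral.integral_const, smul_eq_mul]
    have h3 : (t - s) * b - 2 * C ≤ ∫ τ in s..t, a τ := by
      have := abs_le.1 (hC s)
      have := abs_le.1 (hC t)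
      nlinarith [h1, h2]
    have h4 : (b - ε) * (t - s) ≤ ∫ τ in s..t, a τ := by nlinarith
    calc b - ε = ((b - ε) * (t - s)) * (t - s)⁻¹ := by field_simp
      _ ≤ (∫ τ in s..t, a τ) * (t - s)⁻¹ :=
          mul_le_mul_of_nonneg_right h4 (by positivity)
      _ = (t - s)⁻¹ * ∫ τ in s..t, a τ := mul_comm _ _
  have h5 := hinner.trans (lmInner_le_leastMean hbd R)
  linarith
end

section
variable {a : ℝ → ℝ} {M : ℝ}

lemma dirA (hmeas : Measurable a) (hbd : ∀ t, |a t| ≤ M) {ε : ℝ} (hε : 0 < ε) :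
    ∃ A : ℝ → ℝ, LocallyLipschitz A ∧ (∃ C, ∀ u, |A u| ≤ C) ∧
      leastMean a - ε ≤ essInf (fun τ => a τ - deriv A τ) volume := by
  have hM : 0 ≤ M := le_trans (abs_nonneg _) (hbd 0)
  set c := leastMean a - ε with hc
  obtain ⟨r₀, hr₀⟩ := exists_lmInner_gt hbd (show c < leastMean a by rw [hc]; linarith)
  set R := max r₀ 1 with hRdef
  have hR1 : (1 : ℝ) ≤ R := le_max_right _ _
  have hkey : ∀ s t : ℝ, R ≤ t - s → c * (t - s) ≤ ∫ τ in s..t, a τ := by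
    intro s t hst
    have hd0 : (0 : ℝ) < t - s := by linarith
    have h1 : lmInner a r₀ ≤ (t - s)⁻¹ * ∫ τ in s..t, a τ :=
      lmInner_le hbd (p := (s, t)) (le_trans (le_max_left _ _) hst)
    have h2 : lmInner a r₀ * (t - s) ≤ ∫ τ in s..t, a τ := by
      have h3 := mul_le_mul_of_nonneg_right h1 hd0.le
      rwa [inv_mul_eq_div, div_mul_cancel₀ _ hd0.ne'] at h3
    nlinarith [hr₀.le]
  set L := M + |c| with hL
  have hL0 : 0 ≤ L := by positivity
  have hLa : ∀ τ, |a τ - c| ≤ L := fun τ =>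
    calc |a τ - c| ≤ |a τ| + |c| := abs_sub _ _
      _ ≤ L := by rw [hL]; linarith [hbd τ]
  have hInt' : ∀ s t : ℝ, IntervalIntegrable (fun τ => a τ - c) volume s t :=
    intervalIntegrable_of_bounded (hmeas.sub measurable_const) hLa
  set F := fun u : ℝ => ∫ τ in (0:ℝ)..u, (a τ - c) with hF
  have hFsub : ∀ p q : ℝ, F q - F p = ∫ τ in p..q, (a τ - c) := fun p q =>
    integral_interval_sub_left (hInt' 0 q) (hInt' 0 p)
  have hFlip : ∀ p q : ℝ, |F q - F p| ≤ L * |q - p| := by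
    intro p q
    rw [hFsub]
    simpa [Real.norm_eq_abs] using
      intervalIntegral.norm_integral_le_of_norm_le_const (C := L) (f := fun τ => a τ - c)
        (fun x _ => by simpa [Real.norm_eq_abs] using hLa x)
  have hFmono : ∀ s t : ℝ, R ≤ t - s → F s ≤ F t := by
    intro s t hst
    have h1 : F t - F s = (∫ τ in s..t, a τ) - (t - s) * c := by
      rw [hFsub s t, intervalIntegral.integral_sub (intervalIntegrable_of_bounded hmeas hbd s t)
        intervalIntegrable_const, intervalIntegral.integral_const, smul_eq_mul]
    have h2 := hkey s t hst
    nlinarith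
  set D := L * R with hD
  have hD0 : 0 ≤ D := by positivity
  have hFD : ∀ s t : ℝ, s ≤ t → F s ≤ F t + D := by
    intro s t hst
    rcases le_or_gt R (t - s) with h | h
    · linarith [hFmono s t h]
    · have h1 := abs_le.1 (hFlip t s)
      rw [abs_of_nonpos (by linarith : s - t ≤ 0)] at h1
      have : L * (-(s - t)) ≤ L * R := mul_le_mul_of_nonneg_left (by linarith) hL0
      linarith [h1.1]
  haveI hne : ∀ u : ℝ, Nonempty ↥(Iic u) := fun u => Set.nonempty_Iic.to_subtype
  set G := fun u : ℝ => ⨆ s : Iic u, F (s : ℝ) with hG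
  have hGbdd : ∀ u : ℝ, BddAbove (Set.range fun s : Iic u => F (s : ℝ)) := by
    intro u
    refine ⟨F u + D, ?_⟩
    rintro x ⟨⟨s, hs⟩, rfl⟩
    exact hFD s u hs
  have hFG : ∀ u : ℝ, F u ≤ G u := fun u => le_ciSup (hGbdd u) ⟨u, mem_Iic.2 le_rfl⟩
  have hGD : ∀ u : ℝ, G u ≤ F u + D := fun u => ciSup_le fun ⟨s, hs⟩ => hFD s u hs
  have hGmono : Monotone G := by
    intro u v huv
    exact ciSup_le fun ⟨s, hs⟩ => le_ciSup_of_le (hGbdd v) ⟨s, le_trans hs huv⟩ le_rfl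
  have hGlip : ∀ u v : ℝ, u ≤ v → G v ≤ G u + L * (v - u) := by
    intro u v huv
    refine ciSup_le fun ⟨s, hs⟩ => ?_
    rcases le_or_gt s u with h | h
    · have h1 : F s ≤ G u := le_ciSup_of_le (hGbdd u) ⟨s, h⟩ le_rfl
      nlinarith
    · have h1 := abs_le.1 (hFlip u s)
      rw [abs_of_nonneg (by linarith : (0:ℝ) ≤ s - u)] at h1
      have h2 : F u ≤ G u := hFG u
      have h3 : L * (s - u) ≤ L * (v - u) :=
        mul_le_mul_of_nonneg_left (by have := mem_Iic.1 hs; linarith) hL0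
      linarith [h1.1]
  set K : NNReal := Real.toNNReal L with hK
  have hKc : (K : ℝ) = L := Real.coe_toNNReal _ hL0
  have hFlips : LipschitzWith K F := by
    refine LipschitzWith.of_dist_le_mul fun p q => ?_
    rw [Real.dist_eq, Real.dist_eq, hKc, abs_sub_comm, abs_sub_comm p q]
    exact hFlip p q
  have hGlips : LipschitzWith K G := by
    refine LipschitzWith.of_dist_le_mul fun p q => ?_
    rw [Real.dist_eq, Real.dist_eq, hKc]
    rcases le_total p q with h | h
    · rw [abs_sub_comm, abs_of_nonneg (sub_nonneg.2 (hGmono h)), abs_sub_comm p q,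
        abs_of_nonneg (sub_nonneg.2 h)]
      linarith [hGlip p q h]
    · rw [abs_of_nonneg (sub_nonneg.2 (hGmono h)), abs_of_nonneg (sub_nonneg.2 h)]
      linarith [hGlip q p h]
  set A := fun u : ℝ => F u - G u with hA
  have hAbd : ∀ u, |A u| ≤ D := fun u => abs_le.2 ⟨by simp only [hA]; linarith [hGD u],
    by simp only [hA]; linarith [hFG u, hD0]⟩
  have hAlip : LipschitzWith (K + K) A := hFlips.sub hGlips
  have hAlocal : LocallyLipschitz A := hAlip.locallyLipschitz
  have hF' : ∀ᵐ τ : ℝ, HasDerivAt F (a τ - c) τ :=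
    ae_hasDerivAt_primitive (hmeas.sub measurable_const) hLa
  have hGd : ∀ᵐ τ : ℝ, DifferentiableAt ℝ G τ := hGlips.ae_differentiableAt
  have hAd : ∀ᵐ τ : ℝ, DifferentiableAt ℝ A τ := hAlip.ae_differentiableAt
  have hkey2 : ∀ᵐ τ : ℝ, deriv A τ ≤ a τ - c := by
    filter_upwards [hF', hGd, hAd] with τ h1 h2 h3
    have h4 : HasDerivAt (fun u => A u + G u) (deriv A τ + deriv G τ) τ :=
      h3.hasDerivAt.add h2.hasDerivAt
    have h5 : (fun u => A u + G u) = F := by funext u; simp [hA]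
    rw [h5] at h4
    have h6 : deriv A τ + deriv G τ = a τ - c := h4.unique h1
    have h7 : 0 ≤ deriv G τ := deriv_nonneg_of_monotone hGmono h2.hasDerivAt
    linarith
  refine ⟨A, hAlocal, ⟨D, hAbd⟩, ?_⟩
  rw [essInf_eq_sSup']
  refine le_csSup (bddAbove_essLB _) ?_
  show c ∈ {b : ℝ | ∀ᵐ x : ℝ, b ≤ a x - deriv A x}
  filter_upwards [hkey2] with τ h
  linarith
end

end Helpers

theorem stmt2 (a : ℝ → ℝ) (hmeas : Measurable a)
    (M : ℝ) (hbd : ∀ t, |a t| ≤ M)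
    (h0 : 0 < leastMean a) (hle : leastMean a ≤ upperMean a) :
    leastMean a =
      ⨆ A : {A : ℝ → ℝ // LocallyLipschitz A ∧ ∃ C, ∀ t, |A t| ≤ C},
        essInf (fun τ => a τ - deriv (A : ℝ → ℝ) τ) (volume : Measure ℝ) := by
  have hsupBdd : BddAbove (Set.range fun A : {A : ℝ → ℝ // LocallyLipschitz A ∧ ∃ C, ∀ t, |A t| ≤ C} =>
      essInf (fun τ => a τ - deriv (A : ℝ → ℝ) τ) (volume : Measure ℝ)) := by
    refine ⟨leastMean a, ?_⟩
    rintro x ⟨A, rfl⟩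
    obtain ⟨hA, C, hC⟩ := A.2
    exact dirB hmeas hbd h0 hA hC
  haveI : Nonempty {A : ℝ → ℝ // LocallyLipschitz A ∧ ∃ C, ∀ t, |A t| ≤ C} :=
    ⟨⟨fun _ => 0, LocallyLipschitz.const 0, 0, fun t => by simp⟩⟩
  apply le_antisymm
  · refine le_of_forall_pos_le_add fun ε hε => ?_
    obtain ⟨A, hA, hCex, hge⟩ := dirA hmeas hbd hε
    have h1 : essInf (fun τ => a τ - deriv A τ) (volume : Measure ℝ) ≤
        ⨆ A : {A : ℝ → ℝ // LocallyLipschitz A ∧ ∃ C, ∀ t, |A t| ≤ C},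
          essInf (fun τ => a τ - deriv (A : ℝ → ℝ) τ) (volume : Measure ℝ) :=
      le_ciSup hsupBdd (⟨A, hA, hCex⟩ : {A : ℝ → ℝ // LocallyLipschitz A ∧ ∃ C, ∀ t, |A t| ≤ C})
    linarith
  · refine ciSup_le fun A => ?_
    obtain ⟨hA, C, hC⟩ := A.2
    exact dirB hmeas hbd h0 hA hC
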